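/- Let f : R^d → R be differentiable and L-smooth, let V̄ be a positive-definite diagonal matrix with diagonal entries in [v_min, v_max], and let z, z⁺, x ∈ R^d, α > 0. Then f(z⁺) ≤ f(z) + (L²/2)‖z − x‖² − α(v_max^{−1/2} − α v_min^{−1/2}/2)‖∇f(x)‖² + (v_max^{1/2}/2)‖(z − z⁺)/α − V̄^{−1/2}∇f(x)‖² + ((L+1)/2)‖z − z⁺‖². -/

import Mathlib

set_option maxHeartbeats 1000000

open RealInnerProductSpace

/-- Coordinatewise action of `V̄^{-1/2}` for a positive diagonal matrix with diagonal `v`. -/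
noncomputable def invSqrtMul {d : ℕ} (v : Fin d → ℝ) (x : EuclideanSpace ℝ (Fin d)) :
    EuclideanSpace ℝ (Fin d) := WithLp.toLp 2 (fun j => (v j) ^ (-(1 / 2 : ℝ)) * x j)

/-- Descent lemma for L-smooth functions. -/
lemma descent_lemma {E : Type*} [NormedAddCommGroup E] [InnerProductSpace ℝ E]
    [CompleteSpace E] (L : ℝ) (hL : 0 ≤ L) (f : E → ℝ)
    (hdiff : ∀ y, DifferentiableAt ℝ f y)
    (hsmooth : ∀ y w, ‖gradient f y - gradient f w‖ ≤ L * ‖y - w‖)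
    (a b : E) :
    f b ≤ f a + ⟪gradient f a, b - a⟫ + L / 2 * ‖b - a‖ ^ 2 := by
  set p := b - a with hp
  set c : ℝ → E := fun t => a + t • p with hc
  have hca : c 0 = a := by simp [hc]
  have hcb : c 1 = b := by simp [hc, hp]
  have hcd : ∀ t : ℝ, HasDerivAt c p t := by
    intro t
    simpa [hc] using ((hasDerivAt_id t).smul_const p).const_add a
  have hgd : ∀ t : ℝ, HasDerivAt (fun s => f (c s)) ⟪gradient f (c t), p⟫ t := by
    intro t
    have h1 := (hdiff (c t)).hasGradientAt.hasFDerivAt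
    have := h1.comp_hasDerivAt t (hcd t)
    simpa [InnerProductSpace.toDual_apply_apply, Function.comp_def] using this
  have hlip : LipschitzWith (Real.toNNReal L) (gradient f) := by
    apply LipschitzWith.of_dist_le_mul
    intro y w
    simpa [dist_eq_norm, Real.coe_toNNReal L hL] using hsmooth y w
  have hcc : Continuous c := by
    apply Continuous.add continuous_const
    exact continuous_id.smul continuous_const
  have hcont : Continuous fun t : ℝ => ⟪gradient f (c t), p⟫ :=
    ((hlip.continuous.comp hcc)).inner continuous_const
  have hint : f b - f a = ∫ t in (0:ℝ)..1, ⟪gradient f (c t), p⟫ := by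
    have h := intervalIntegral.integral_eq_sub_of_hasDerivAt
      (f := fun s => f (c s)) (fun t _ => hgd t) (hcont.intervalIntegrable 0 1)
    simpa [hca, hcb] using h.symm
  have hcont2 : Continuous fun t : ℝ => ⟪gradient f a, p⟫ + L * t * ‖p‖ ^ 2 := by
    continuity
  have hbound : (∫ t in (0:ℝ)..1, ⟪gradient f (c t), p⟫)
      ≤ ∫ t in (0:ℝ)..1, (⟪gradient f a, p⟫ + L * t * ‖p‖ ^ 2) := by
    apply intervalIntegral.integral_mono_on (by norm_num)
      (hcont.intervalIntegrable 0 1) (hcont2.intervalIntegrable 0 1)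
    intro t ht
    obtain ⟨ht0, ht1⟩ := ht
    have hsplit : ⟪gradient f (c t), p⟫
        = ⟪gradient f a, p⟫ + ⟪gradient f (c t) - gradient f a, p⟫ := by
      rw [inner_sub_left]; ring
    have h1 : ⟪gradient f (c t) - gradient f a, p⟫
        ≤ ‖gradient f (c t) - gradient f a‖ * ‖p‖ := real_inner_le_norm _ _
    have h2 : ‖gradient f (c t) - gradient f a‖ ≤ L * (t * ‖p‖) := by
      have h3 := hsmooth (c t) a
      have h4 : c t - a = t • p := by simp [hc]
      rw [h4, norm_smul, Real.norm_eq_abs, abs_of_nonneg ht0] at h3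
      exact h3
    have h5 : ‖gradient f (c t) - gradient f a‖ * ‖p‖ ≤ L * (t * ‖p‖) * ‖p‖ :=
      mul_le_mul_of_nonneg_right h2 (norm_nonneg p)
    rw [hsplit]
    nlinarith [norm_nonneg p]
  have hval : (∫ t in (0:ℝ)..1, (⟪gradient f a, p⟫ + L * t * ‖p‖ ^ 2))
      = ⟪gradient f a, p⟫ + L / 2 * ‖p‖ ^ 2 := by
    have hF : ∀ t ∈ Set.uIcc (0:ℝ) 1,
        HasDerivAt (fun t : ℝ => ⟪gradient f a, p⟫ * t + L * ‖p‖ ^ 2 / 2 * t ^ 2)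
          (⟪gradient f a, p⟫ + L * t * ‖p‖ ^ 2) t := by
      intro t _
      have ha : HasDerivAt (fun t : ℝ => ⟪gradient f a, p⟫ * t) ⟪gradient f a, p⟫ t := by
        simpa using (hasDerivAt_id t).const_mul ⟪gradient f a, p⟫
      have hb : HasDerivAt (fun t : ℝ => L * ‖p‖ ^ 2 / 2 * t ^ 2)
          (L * ‖p‖ ^ 2 / 2 * (2 * t)) t := by
        simpa using (hasDerivAt_pow 2 t).const_mul (L * ‖p‖ ^ 2 / 2)
      have := ha.add hb
      exact this.congr_deriv (by ring)
    rw [intervalIntegral.integral_eq_sub_of_hasDerivAt hF (hcont2.intervalIntegrable 0 1)]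
    ring
  have := hbound.trans_eq hval
  linarith [hint ▸ this]

/-- Descent-type inequality from smoothness with adaptive diagonal scaling. -/
theorem stmt_17 (d : ℕ) (L α vmin vmax : ℝ)
    (hL : 0 ≤ L) (hα : 0 < α) (hmin : 0 < vmin) (hle : vmin ≤ vmax)
    (f : EuclideanSpace ℝ (Fin d) → ℝ)
    (hdiff : ∀ y, DifferentiableAt ℝ f y)
    (hsmooth : ∀ y w, ‖gradient f y - gradient f w‖ ≤ L * ‖y - w‖)
    (vbar : Fin d → ℝ) (hvbar : ∀ j, vbar j ∈ Set.Icc vmin vmax)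
    (z zp x : EuclideanSpace ℝ (Fin d)) :
    f zp ≤ f z + L ^ 2 / 2 * ‖z - x‖ ^ 2
        - α * (vmax ^ (-(1 / 2 : ℝ)) - α * vmin ^ (-(1 / 2 : ℝ)) / 2) * ‖gradient f x‖ ^ 2
        + vmax ^ ((1 / 2 : ℝ)) / 2 *
            ‖(1 / α) • (z - zp) - invSqrtMul vbar (gradient f x)‖ ^ 2
        + (L + 1) / 2 * ‖z - zp‖ ^ 2 := by
  have hmax : (0:ℝ) < vmax := lt_of_lt_of_le hmin hle
  set gx := gradient f x with hgx
  set gz := gradient f z with hgz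
  set u : EuclideanSpace ℝ (Fin d) := (1 / α) • (z - zp) with hu
  set w : EuclideanSpace ℝ (Fin d) := invSqrtMul vbar gx with hw
  set s := vmax ^ ((1/2:ℝ)) with hs
  set si := vmax ^ (-(1/2:ℝ)) with hsi
  set smin := vmin ^ (-(1/2:ℝ)) with hsmin
  have hspos : 0 < s := Real.rpow_pos_of_pos hmax _
  have hsipos : 0 < si := Real.rpow_pos_of_pos hmax _
  have hss : s * si = 1 := by
    rw [hs, hsi, ← Real.rpow_add hmax]; norm_num
  have hsile : si ≤ smin := Real.rpow_le_rpow_of_nonpos hmin hle (by norm_num)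
  -- descent
  have key := descent_lemma L hL f hdiff hsmooth z zp
  rw [← hgz] at key
  set A := ‖gx‖ with hA
  set B := ‖u - w‖ with hB
  set N := ‖z - zp‖ with hN
  set M := ‖z - x‖ with hM
  have hN0 : 0 ≤ N := hN ▸ norm_nonneg _
  have hNrev : ‖zp - z‖ = N := by rw [hN, norm_sub_rev]
  rw [hNrev] at key
  -- split the inner product
  set I0 := ⟪gz, zp - z⟫ with hI0
  set I1 := ⟪gz - gx, zp - z⟫ with hI1
  set I2 := ⟪gx, u - w⟫ with hI2
  set I3 := ⟪gx, w⟫ with hI3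
  have hsplit : I0 = I1 + ⟪gx, zp - z⟫ := by
    rw [hI0, hI1, inner_sub_left]; ring
  -- term 1
  have h1 : I1 ≤ L * M * N := by
    have hcs := real_inner_le_norm (gz - gx) (zp - z)
    rw [hNrev, ← hI1] at hcs
    have h2 := hsmooth z x
    rw [← hgz, ← hgx, ← hM] at h2
    have h5 : ‖gz - gx‖ * N ≤ L * M * N := mul_le_mul_of_nonneg_right h2 hN0
    linarith
  -- term 2
  have hzzp : z - zp = α • u := by
    rw [hu, smul_smul, mul_one_div, div_self hα.ne', one_smul]
  have hT2 : ⟪gx, zp - z⟫ = -(α * I2) - α * I3 := by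
    have hneg : zp - z = -(α • u) := by rw [← hzzp]; abel
    rw [hneg, inner_neg_right, real_inner_smul_right, hI2, hI3, inner_sub_right]
    ring
  have h2a : -I2 ≤ A * B := by
    have h := abs_real_inner_le_norm gx (u - w)
    rw [← hA, ← hB, ← hI2] at h
    cases abs_le.mp h with
    | intro hl hr => linarith
  have h2b : si * A ^ 2 ≤ I3 := by
    have hinner : I3 = ∑ j, gx j * ((vbar j) ^ (-(1/2:ℝ)) * gx j) := by
      rw [hI3, hw]
      simp [invSqrtMul, PiLp.inner_apply, RCLike.inner_apply]
      exact Finset.sum_congr rfl fun j _ => by ring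
    have hnorm : A ^ 2 = ∑ j, gx j * gx j := by
      rw [hA, ← real_inner_self_eq_norm_sq]
      simp only [PiLp.inner_apply, RCLike.inner_apply, conj_trivial]
    rw [hinner, hnorm, Finset.mul_sum]
    apply Finset.sum_le_sum
    intro j _
    have hvj := hvbar j
    have hvjpos : 0 < vbar j := lt_of_lt_of_le hmin hvj.1
    have hle2 : si ≤ (vbar j) ^ (-(1/2:ℝ)) :=
      Real.rpow_le_rpow_of_nonpos hvjpos hvj.2 (by norm_num)
    nlinarith [sq_nonneg (gx j), hle2]
  -- Young's inequality
  have hyoung : 2 * (α * (A * B)) ≤ smin * α ^ 2 * A ^ 2 + s * B ^ 2 := by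
    have q2 : 0 ≤ s * (si * α * A - B) ^ 2 := mul_nonneg hspos.le (sq_nonneg _)
    have q3 : s * (si * α * A - B) ^ 2
        = (s * si) * si * (α ^ 2 * A ^ 2) - 2 * (s * si) * (α * (A * B)) + s * B ^ 2 := by
      ring
    rw [q3, hss] at q2
    have q4 : si * (α ^ 2 * A ^ 2) ≤ smin * (α ^ 2 * A ^ 2) :=
      mul_le_mul_of_nonneg_right hsile (by positivity)
    nlinarith [q2, q4]
  have hLMN : L * M * N ≤ L ^ 2 / 2 * M ^ 2 + 1 / 2 * N ^ 2 := by
    nlinarith [sq_nonneg (L * M - N)]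
  have h2a' : α * (-I2) ≤ α * (A * B) := mul_le_mul_of_nonneg_left h2a hα.le
  have h2b' : α * (si * A ^ 2) ≤ α * I3 := mul_le_mul_of_nonneg_left h2b hα.le
  have hmid : f zp ≤ f z + L * M * N + α * (A * B) - α * (si * A ^ 2)
      + L / 2 * N ^ 2 := by
    have := hsplit ▸ key
    linarith [hT2, h2a', h2b', key, hsplit]
  have hfin : f z + L * M * N + α * (A * B) - α * (si * A ^ 2) + L / 2 * N ^ 2
      ≤ f z + L ^ 2 / 2 * M ^ 2 - α * (si - α * smin / 2) * A ^ 2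
        + s / 2 * B ^ 2 + (L + 1) / 2 * N ^ 2 := by
    have hexp : α * (si - α * smin / 2) * A ^ 2
        = α * (si * A ^ 2) - smin * α ^ 2 * A ^ 2 / 2 := by ring
    linarith [hyoung, hLMN, hexp]
  exact hmid.trans hfin
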